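/- For every odd prime p, the element r_b ∈ F_4 does not belong to the subgroup W̄_p · γ_{p+1} F_4. -/

import Mathlib

/-- `W_n`, the set of `n`-th powers in a group `G`. -/
def powSet (G : Type*) [Group G] (n : ℕ) : Set G := {x | ∃ w : G, x = w ^ n}

/-- `W̄_n`, the normal subgroup of the free group `F_m` generated by the set `W_n`
of `n`-th powers. -/
def Wbar (m n : ℕ) : Subgroup (FreeGroup (Fin m)) :=
  Subgroup.normalClosure (powSet (FreeGroup (Fin m)) n)

instance (m n : ℕ) : (Wbar m n).Normal := Subgroup.normalClosure_normal

/-- `W̄_n · γ_q F_m`: since both factors are normal subgroups of `F_m`, this product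
subgroup equals the join.  (Recall `lowerCentralSeries G 0 = G = γ₁ G`, so
`γ_q G = lowerCentralSeries G (q-1)`.) -/
def WbarGamma (m n q : ℕ) : Subgroup (FreeGroup (Fin m)) :=
  Wbar m n ⊔ Subgroup.lowerCentralSeries (⊤ : Subgroup (FreeGroup (Fin m))) (q - 1)

instance (m n q : ℕ) : (WbarGamma m n q).Normal := Subgroup.sup_normal _ _

/-- `F^q(m,n) = F_m / (W̄_n · γ_q F_m)`. -/
def BurnsideQuot (m n q : ℕ) : Type := FreeGroup (Fin m) ⧸ WbarGamma m n q

noncomputable instance (m n q : ℕ) : Group (BurnsideQuot m n q) :=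
  QuotientGroup.Quotient.group _

/-- The generators `x_1, …, x_4` of the free group `F_4` (`xF4 i` is `x_{i+1}`). -/
def xF4 (i : Fin 4) : FreeGroup (Fin 4) := FreeGroup.of i

/-- `Q_3 = x_4x_1⁻¹x_2x_4⁻¹x_1x_2⁻¹ · x_3 · x_2⁻¹x_1x_4⁻¹x_2x_1⁻¹x_4 ∈ F_4`. -/
def QWelded : FreeGroup (Fin 4) :=
  xF4 3 * (xF4 0)⁻¹ * xF4 1 * (xF4 3)⁻¹ * xF4 0 * (xF4 1)⁻¹ *
  xF4 2 *
  (xF4 1)⁻¹ * xF4 0 * (xF4 3)⁻¹ * xF4 1 * (xF4 0)⁻¹ * xF4 3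

/-- `r_b = Q_3 x_3⁻¹ ∈ F_4`, the relator of the associated core group of the closure
of the welded 4-braid `b`. -/
def rWelded : FreeGroup (Fin 4) := QWelded * (xF4 2)⁻¹

/-! ### Auxiliary group 1: unitriangular 4×4 matrices over a commutative ring.

An element `⟨a,b,c,d,e,f⟩` represents `1 + a·E₁₂ + b·E₂₃ + c·E₃₄ + d·E₁₃ + e·E₂₄ + f·E₁₄`.
Over `ZMod p` with `p ≥ 5` prime this group has exponent `p` and nilpotency class 3. -/

@[ext] structure UT (R : Type) where
  a : R
  b : R
  c : R
  d : R
  e : R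
  f : R

namespace UT
variable {R : Type} [CommRing R]

def umul (x y : UT R) : UT R :=
  ⟨x.a + y.a, x.b + y.b, x.c + y.c, x.d + y.d + x.a * y.b, x.e + y.e + x.b * y.c,
   x.f + y.f + x.a * y.e + x.d * y.c⟩

def uinv (x : UT R) : UT R :=
  ⟨-x.a, -x.b, -x.c, -x.d + x.a * x.b, -x.e + x.b * x.c,
   -x.f + x.a * x.e + x.d * x.c - x.a * x.b * x.c⟩

instance : Group (UT R) where
  mul := umul
  one := ⟨0, 0, 0, 0, 0, 0⟩
  inv := uinv
  mul_assoc x y z := by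
    show umul (umul x y) z = umul x (umul y z)
    ext <;> simp [umul] <;> ring
  one_mul x := by show umul ⟨0,0,0,0,0,0⟩ x = x; ext <;> simp [umul]
  mul_one x := by show umul x ⟨0,0,0,0,0,0⟩ = x; ext <;> simp [umul]
  inv_mul_cancel x := by
    show umul (uinv x) x = ⟨0,0,0,0,0,0⟩
    ext <;> simp [umul, uinv] <;> ring

@[simp] lemma mul_a (x y : UT R) : (x * y).a = x.a + y.a := rfl
@[simp] lemma mul_b (x y : UT R) : (x * y).b = x.b + y.b := rfl
@[simp] lemma mul_c (x y : UT R) : (x * y).c = x.c + y.c := rfl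
@[simp] lemma mul_d (x y : UT R) : (x * y).d = x.d + y.d + x.a * y.b := rfl
@[simp] lemma mul_e (x y : UT R) : (x * y).e = x.e + y.e + x.b * y.c := rfl
@[simp] lemma mul_f (x y : UT R) : (x * y).f = x.f + y.f + x.a * y.e + x.d * y.c := rfl
@[simp] lemma inv_a (x : UT R) : (x⁻¹).a = -x.a := rfl
@[simp] lemma inv_b (x : UT R) : (x⁻¹).b = -x.b := rfl
@[simp] lemma inv_c (x : UT R) : (x⁻¹).c = -x.c := rfl
@[simp] lemma inv_d (x : UT R) : (x⁻¹).d = -x.d + x.a * x.b := rfl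
@[simp] lemma inv_e (x : UT R) : (x⁻¹).e = -x.e + x.b * x.c := rfl
@[simp] lemma inv_f (x : UT R) : (x⁻¹).f = -x.f + x.a * x.e + x.d * x.c - x.a * x.b * x.c := rfl
@[simp] lemma one_a : (1 : UT R).a = 0 := rfl
@[simp] lemma one_b : (1 : UT R).b = 0 := rfl
@[simp] lemma one_c : (1 : UT R).c = 0 := rfl
@[simp] lemma one_d : (1 : UT R).d = 0 := rfl
@[simp] lemma one_e : (1 : UT R).e = 0 := rfl
@[simp] lemma one_f : (1 : UT R).f = 0 := rfl

lemma pow_formula (x : UT R) (n : ℕ) :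
    x ^ n = ⟨(n : R) * x.a, (n : R) * x.b, (n : R) * x.c,
      (n : R) * x.d + (n.choose 2 : R) * (x.a * x.b),
      (n : R) * x.e + (n.choose 2 : R) * (x.b * x.c),
      (n : R) * x.f + (n.choose 2 : R) * (x.a * x.e + x.d * x.c) +
        (n.choose 3 : R) * (x.a * x.b * x.c)⟩ := by
  induction n with
  | zero => ext <;> simp
  | succ n ih =>
    rw [pow_succ, ih]
    ext <;> simp [Nat.choose_succ_succ, Nat.choose_one_right] <;> push_cast <;> ring

def K2 : Subgroup (UT R) where
  carrier := {x | x.a = 0 ∧ x.b = 0 ∧ x.c = 0}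
  one_mem' := by simp
  mul_mem' := by rintro x y ⟨h1, h2, h3⟩ ⟨g1, g2, g3⟩; simp_all
  inv_mem' := by rintro x ⟨h1, h2, h3⟩; simp_all

def K1 : Subgroup (UT R) where
  carrier := {x | x.a = 0 ∧ x.b = 0 ∧ x.c = 0 ∧ x.d = 0 ∧ x.e = 0}
  one_mem' := by simp
  mul_mem' := by rintro x y ⟨h1, h2, h3, h4, h5⟩ ⟨g1, g2, g3, g4, g5⟩; simp_all
  inv_mem' := by rintro x ⟨h1, h2, h3, h4, h5⟩; simp_all

lemma lcs1_le : Subgroup.lowerCentralSeries (⊤ : Subgroup (UT R)) 1 ≤ K2 := by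
  rw [lowerCentralSeries_succ, Subgroup.commutator_def, Subgroup.closure_le]
  rintro x ⟨u, -, v, -, rfl⟩
  refine ⟨?_, ?_, ?_⟩ <;> simp [commutatorElement_def] <;> ring

lemma lcs2_le : Subgroup.lowerCentralSeries (⊤ : Subgroup (UT R)) 2 ≤ K1 := by
  rw [lowerCentralSeries_succ, Subgroup.commutator_def, Subgroup.closure_le]
  rintro x ⟨u, hu, v, -, rfl⟩
  obtain ⟨h1, h2, h3⟩ := lcs1_le hu
  refine ⟨?_, ?_, ?_, ?_, ?_⟩ <;> simp [commutatorElement_def, h1, h2, h3] <;> ring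

lemma lcs3_eq_bot : Subgroup.lowerCentralSeries (⊤ : Subgroup (UT R)) 3 = ⊥ := by
  rw [eq_bot_iff, lowerCentralSeries_succ, Subgroup.commutator_def, Subgroup.closure_le]
  rintro x ⟨u, hu, v, -, rfl⟩
  obtain ⟨h1, h2, h3, h4, h5⟩ := lcs2_le hu
  have huv : u * v = v * u := by ext <;> simp [h1, h2, h3, h4, h5] <;> ring
  have h1 : u * v * u⁻¹ * v⁻¹ = 1 := by rw [huv]; group
  simp [commutatorElement_def, h1, Subgroup.mem_bot]

end UT

/-! ### Auxiliary group 2: a model of the free 2-Engel group of exponent 3 on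
three generators (`≅ B(3,3)`, of order `3⁷`), used for the prime `p = 3`. -/

@[ext] structure Eng where
  a1 : ZMod 3
  a2 : ZMod 3
  a3 : ZMod 3
  b1 : ZMod 3
  b2 : ZMod 3
  b3 : ZMod 3
  g : ZMod 3
deriving DecidableEq

namespace Eng

private lemma three_zero : (3 : ZMod 3) = 0 := by decide

def emul (x y : Eng) : Eng :=
  ⟨x.a1 + y.a1, x.a2 + y.a2, x.a3 + y.a3,
   x.b1 + y.b1 + x.a2 * y.a1,
   x.b2 + y.b2 + x.a3 * y.a1,
   x.b3 + y.b3 + x.a3 * y.a2,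
   x.g + y.g + x.b3 * y.a1 + x.a2 * x.a3 * y.a1 - x.b2 * y.a2 - x.a3 * y.a1 * y.a2
     + x.b1 * y.a3 + x.a2 * y.a1 * y.a3⟩

def einv (x : Eng) : Eng :=
  ⟨-x.a1, -x.a2, -x.a3,
   -x.b1 + x.a1 * x.a2, -x.b2 + x.a1 * x.a3, -x.b3 + x.a2 * x.a3,
   -x.g + x.b3 * x.a1 + x.b1 * x.a3 - x.b2 * x.a2 + x.a1 * x.a2 * x.a3⟩

instance : Group Eng where
  mul := emul
  one := ⟨0, 0, 0, 0, 0, 0, 0⟩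
  inv := einv
  mul_assoc x y z := by
    show emul (emul x y) z = emul x (emul y z)
    ext <;> simp only [emul] <;> first
      | ring1
      | linear_combination (x.a3 * y.a2 * z.a1) * three_zero
  one_mul x := by show emul ⟨0,0,0,0,0,0,0⟩ x = x; ext <;> simp [emul]
  mul_one x := by show emul x ⟨0,0,0,0,0,0,0⟩ = x; ext <;> simp [emul]
  inv_mul_cancel x := by
    show emul (einv x) x = ⟨0,0,0,0,0,0,0⟩
    ext <;> simp only [emul, einv] <;> first
      | ring1
      | linear_combination (x.a1 * x.a2 * x.a3) * three_zero

@[simp] lemma mul_a1 (x y : Eng) : (x * y).a1 = x.a1 + y.a1 := rfl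
@[simp] lemma mul_a2 (x y : Eng) : (x * y).a2 = x.a2 + y.a2 := rfl
@[simp] lemma mul_a3 (x y : Eng) : (x * y).a3 = x.a3 + y.a3 := rfl
@[simp] lemma mul_b1 (x y : Eng) : (x * y).b1 = x.b1 + y.b1 + x.a2 * y.a1 := rfl
@[simp] lemma mul_b2 (x y : Eng) : (x * y).b2 = x.b2 + y.b2 + x.a3 * y.a1 := rfl
@[simp] lemma mul_b3 (x y : Eng) : (x * y).b3 = x.b3 + y.b3 + x.a3 * y.a2 := rfl
@[simp] lemma mul_g (x y : Eng) : (x * y).g = x.g + y.g + x.b3 * y.a1 + x.a2 * x.a3 * y.a1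
    - x.b2 * y.a2 - x.a3 * y.a1 * y.a2 + x.b1 * y.a3 + x.a2 * y.a1 * y.a3 := rfl
@[simp] lemma inv_a1 (x : Eng) : (x⁻¹).a1 = -x.a1 := rfl
@[simp] lemma inv_a2 (x : Eng) : (x⁻¹).a2 = -x.a2 := rfl
@[simp] lemma inv_a3 (x : Eng) : (x⁻¹).a3 = -x.a3 := rfl
@[simp] lemma inv_b1 (x : Eng) : (x⁻¹).b1 = -x.b1 + x.a1 * x.a2 := rfl
@[simp] lemma inv_b2 (x : Eng) : (x⁻¹).b2 = -x.b2 + x.a1 * x.a3 := rfl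
@[simp] lemma inv_b3 (x : Eng) : (x⁻¹).b3 = -x.b3 + x.a2 * x.a3 := rfl
@[simp] lemma inv_g (x : Eng) : (x⁻¹).g = -x.g + x.b3 * x.a1 + x.b1 * x.a3 - x.b2 * x.a2
    + x.a1 * x.a2 * x.a3 := rfl
@[simp] lemma one_a1 : (1 : Eng).a1 = 0 := rfl
@[simp] lemma one_a2 : (1 : Eng).a2 = 0 := rfl
@[simp] lemma one_a3 : (1 : Eng).a3 = 0 := rfl
@[simp] lemma one_b1 : (1 : Eng).b1 = 0 := rfl
@[simp] lemma one_b2 : (1 : Eng).b2 = 0 := rfl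
@[simp] lemma one_b3 : (1 : Eng).b3 = 0 := rfl
@[simp] lemma one_g : (1 : Eng).g = 0 := rfl

lemma cube (x : Eng) : x ^ 3 = 1 := by
  have h3 : x ^ 3 = x * x * x := by rw [pow_succ, pow_succ, pow_one]
  rw [h3]
  ext <;> simp <;> first
    | linear_combination x.a1 * three_zero
    | linear_combination x.a2 * three_zero
    | linear_combination x.a3 * three_zero
    | linear_combination (x.b1 + x.a1 * x.a2) * three_zero
    | linear_combination (x.b2 + x.a1 * x.a3) * three_zero
    | linear_combination (x.b3 + x.a2 * x.a3) * three_zero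
    | linear_combination (x.g + x.a1 * x.b3 + 2 * x.a1 * x.a2 * x.a3 - x.a2 * x.b2
        + x.a3 * x.b1) * three_zero

def K2 : Subgroup Eng where
  carrier := {x | x.a1 = 0 ∧ x.a2 = 0 ∧ x.a3 = 0}
  one_mem' := by simp
  mul_mem' := by rintro x y ⟨h1, h2, h3⟩ ⟨g1, g2, g3⟩; simp_all
  inv_mem' := by rintro x ⟨h1, h2, h3⟩; simp_all

def K1 : Subgroup Eng where
  carrier := {x | x.a1 = 0 ∧ x.a2 = 0 ∧ x.a3 = 0 ∧ x.b1 = 0 ∧ x.b2 = 0 ∧ x.b3 = 0}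
  one_mem' := by simp
  mul_mem' := by rintro x y ⟨h1, h2, h3, h4, h5, h6⟩ ⟨g1, g2, g3, g4, g5, g6⟩; simp_all
  inv_mem' := by rintro x ⟨h1, h2, h3, h4, h5, h6⟩; simp_all

lemma lcs1_le : Subgroup.lowerCentralSeries (⊤ : Subgroup Eng) 1 ≤ K2 := by
  rw [lowerCentralSeries_succ, Subgroup.commutator_def, Subgroup.closure_le]
  rintro x ⟨u, -, v, -, rfl⟩
  refine ⟨?_, ?_, ?_⟩ <;> simp [commutatorElement_def] <;> ring

lemma lcs2_le : Subgroup.lowerCentralSeries (⊤ : Subgroup Eng) 2 ≤ K1 := by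
  rw [lowerCentralSeries_succ, Subgroup.commutator_def, Subgroup.closure_le]
  rintro x ⟨u, hu, v, -, rfl⟩
  obtain ⟨h1, h2, h3⟩ := lcs1_le hu
  refine ⟨?_, ?_, ?_, ?_, ?_, ?_⟩ <;> simp [commutatorElement_def, h1, h2, h3] <;> ring

lemma lcs3_eq_bot : Subgroup.lowerCentralSeries (⊤ : Subgroup Eng) 3 = ⊥ := by
  rw [eq_bot_iff, lowerCentralSeries_succ, Subgroup.commutator_def, Subgroup.closure_le]
  rintro x ⟨u, hu, v, -, rfl⟩
  obtain ⟨h1, h2, h3, h4, h5, h6⟩ := lcs2_le hu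
  have huv : u * v = v * u := by
    ext <;> simp [h1, h2, h3, h4, h5, h6] <;> ring
  have h0 : u * v * u⁻¹ * v⁻¹ = 1 := by rw [huv]; group
  simp [commutatorElement_def, h0, Subgroup.mem_bot]

end Eng

/-! ### The key criterion -/

/-- If `G` has exponent `p`, nilpotency class at most 3 with `3 ≤ p`, and some
homomorphism `F₄ → G` does not kill `r_b`, then `r_b ∉ W̄_p γ_{p+1} F₄`. -/
lemma key_criterion {G : Type} [Group G] (φ : FreeGroup (Fin 4) →* G) {p : ℕ}
    (hp3 : 3 ≤ p) (hexp : ∀ g : G, g ^ p = 1) (hnil : Subgroup.lowerCentralSeries (⊤ : Subgroup G) 3 = ⊥)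
    (hr : φ rWelded ≠ 1) : rWelded ∉ WbarGamma 4 p (p + 1) := by
  intro hmem
  apply hr
  have hker : WbarGamma 4 p (p + 1) ≤ φ.ker := by
    unfold WbarGamma
    rw [Nat.add_sub_cancel]
    apply sup_le
    · apply Subgroup.normalClosure_le_normal
      rintro x ⟨w, rfl⟩
      simp only [SetLike.mem_coe, MonoidHom.mem_ker, map_pow]
      exact hexp (φ w)
    · intro x hx
      have h1 : φ x ∈ Subgroup.lowerCentralSeries (⊤ : Subgroup G) p :=
        lowerCentralSeries.map φ p (Subgroup.mem_map_of_mem φ hx)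
      have h2 := lowerCentralSeries_antitone (⊤ : Subgroup G) hp3 h1
      rw [hnil, Subgroup.mem_bot] at h2
      simpa [MonoidHom.mem_ker] using h2
  exact hker hmem

set_option maxRecDepth 20000

/-- For every odd prime `p`, the element `r_b ∈ F_4` does not belong
to the subgroup `W̄_p · γ_{p+1} F_4`. -/
theorem rWelded_not_mem_WbarGamma (p : ℕ) (hp : p.Prime) (hodd : Odd p) :
    rWelded ∉ WbarGamma 4 p (p + 1) := by
  obtain ⟨k, hk⟩ := hodd
  have hcase : p = 3 ∨ 5 ≤ p := by have := hp.two_le; omega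
  rcases hcase with rfl | h5
  · -- p = 3 : use the Burnside group model `Eng`
    refine key_criterion (FreeGroup.lift ![(⟨1,0,0,0,0,0,0⟩ : Eng), ⟨0,1,0,0,0,0,0⟩,
      ⟨0,0,1,0,0,0,0⟩, 1]) le_rfl Eng.cube Eng.lcs3_eq_bot ?_
    have hval : FreeGroup.lift ![(⟨1,0,0,0,0,0,0⟩ : Eng), ⟨0,1,0,0,0,0,0⟩,
        ⟨0,0,1,0,0,0,0⟩, 1] rWelded = ⟨0,0,0,0,0,0,1⟩ := by
      simp only [rWelded, QWelded, xF4, map_mul, map_inv, FreeGroup.lift_apply_of,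
        Matrix.cons_val_zero, Matrix.cons_val_one, Matrix.head_cons,
        Matrix.cons_val_two, Matrix.tail_cons, Matrix.cons_val_three]
      decide
    rw [hval]
    decide
  · -- p ≥ 5 : use the unitriangular group `UT (ZMod p)`
    haveI : Fact (1 < p) := ⟨by omega⟩
    have hexp : ∀ g : UT (ZMod p), g ^ p = 1 := by
      intro g
      have hp0 : ((p : ℕ) : ZMod p) = 0 := ZMod.natCast_self p
      have hc2 : ((p.choose 2 : ℕ) : ZMod p) = 0 :=
        (ZMod.natCast_eq_zero_iff _ p).mpr
          (hp.dvd_choose_self (by norm_num) (by omega))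
      have hc3 : ((p.choose 3 : ℕ) : ZMod p) = 0 :=
        (ZMod.natCast_eq_zero_iff _ p).mpr
          (hp.dvd_choose_self (by norm_num) (by omega))
      rw [UT.pow_formula]
      ext <;> simp [hp0, hc2, hc3]
    refine key_criterion (FreeGroup.lift ![(1 : UT (ZMod p)), ⟨0,0,1,0,0,0⟩, 1,
      ⟨1,1,0,0,0,0⟩]) (by omega) hexp UT.lcs3_eq_bot ?_
    intro hEq
    have hf := congrArg UT.f hEq
    simp only [rWelded, QWelded, xF4, map_mul, map_inv, FreeGroup.lift_apply_of,
      Matrix.cons_val_zero, Matrix.cons_val_one, Matrix.head_cons,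
      Matrix.cons_val_two, Matrix.tail_cons, Matrix.cons_val_three,
      UT.mul_a, UT.mul_b, UT.mul_c, UT.mul_d, UT.mul_e, UT.mul_f,
      UT.inv_a, UT.inv_b, UT.inv_c, UT.inv_d, UT.inv_e, UT.inv_f,
      UT.one_a, UT.one_b, UT.one_c, UT.one_d, UT.one_e, UT.one_f] at hf
    norm_num at hf
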